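/- Let A ∈ B(H) be selfadjoint with ‖A‖ ≤ 1, and let V be a symmetry on H such that VA = -AV. Then P_V := (1/2)(1 + A + (1-A²)^{1/2} V) and Q_V := (1/2)(1 - A + (1-A²)^{1/2} V) are orthogonal projections, P_V - Q_V = A, and P_V + Q_V - 1 = (1-A²)^{1/2} V. -/

import Mathlib

open ContinuousLinearMap

set_option maxHeartbeats 1000000
set_option synthInstance.maxHeartbeats 200000

variable {H : Type*} [NormedAddCommGroup H] [InnerProductSpace ℂ H] [CompleteSpace H]

/-- An orthogonal projection: a selfadjoint idempotent bounded operator. -/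
def IsOrthogonalProjection (P : H →L[ℂ] H) : Prop :=
  IsSelfAdjoint P ∧ P * P = P

/-- A symmetry: a selfadjoint unitary operator. -/
def IsSymmetry (V : H →L[ℂ] H) : Prop :=
  IsSelfAdjoint V ∧ V * V = 1

/-- Two orthogonal projections are in generic position if the four canonical
intersections of their ranges and kernels are trivial. -/
def GenericPosition (P Q : H →L[ℂ] H) : Prop :=
  LinearMap.range (P : H →ₗ[ℂ] H) ⊓ LinearMap.range (Q : H →ₗ[ℂ] H) = ⊥ ∧
  LinearMap.range (P : H →ₗ[ℂ] H) ⊓ LinearMap.ker (Q : H →ₗ[ℂ] H) = ⊥ ∧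
  LinearMap.ker (P : H →ₗ[ℂ] H) ⊓ LinearMap.range (Q : H →ₗ[ℂ] H) = ⊥ ∧
  LinearMap.ker (P : H →ₗ[ℂ] H) ⊓ LinearMap.ker (Q : H →ₗ[ℂ] H) = ⊥


/-- If `A` is a selfadjoint contraction, `V` a symmetry anticommuting with `A`,
and `R` is the positive square root of `1 - A²`, then
`P_V = (1/2)(1 + A + R V)` and `Q_V = (1/2)(1 - A + R V)` are orthogonal projections with
`P_V - Q_V = A` and `P_V + Q_V - 1 = R V`. -/
theorem davis_pair_from_symmetry (A V R : H →L[ℂ] H)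
    (hA : IsSelfAdjoint A) (hAnorm : ‖A‖ ≤ 1)
    (hV : IsSymmetry V) (hVA : V * A = -(A * V))
    (hR : R.IsPositive) (hR2 : R * R = 1 - A * A) :
    IsOrthogonalProjection ((1 / 2 : ℂ) • (1 + A + R * V)) ∧
    IsOrthogonalProjection ((1 / 2 : ℂ) • (1 - A + R * V)) ∧
    (1 / 2 : ℂ) • (1 + A + R * V) - (1 / 2 : ℂ) • (1 - A + R * V) = A ∧
    (1 / 2 : ℂ) • (1 + A + R * V) + (1 / 2 : ℂ) • (1 - A + R * V) - 1 = R * V := by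
  rcases subsingleton_or_nontrivial H with hH | hH
  · exact ⟨⟨Subsingleton.elim _ _, Subsingleton.elim _ _⟩,
      ⟨Subsingleton.elim _ _, Subsingleton.elim _ _⟩,
      Subsingleton.elim _ _, Subsingleton.elim _ _⟩
  -- R is selfadjoint
  have hRsa : IsSelfAdjoint R := hR.isSelfAdjoint
  have hRnn : (0:H →L[ℂ] H) ≤ R := (nonneg_iff_isPositive R).mpr hR
  -- A commutes with R
  have hAR : A * R = R * A := by
    set f : ℝ → ℝ := fun x => Real.sqrt (1 - x^2) with hf
    have hspec : ∀ x ∈ spectrum ℝ A, 0 ≤ 1 - x^2 := by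
      intro x hx
      have h1 : ‖x‖ ≤ ‖A‖ := spectrum.norm_le_norm_of_mem hx
      have : |x| ≤ 1 := le_trans h1 hAnorm
      nlinarith [abs_nonneg x, sq_abs x]
    have hR'sq : cfc f A * cfc f A = 1 - A * A := by
      rw [← cfc_mul f f A]
      have : cfc (fun x => f x * f x) A = cfc (fun x : ℝ => 1 - x^2) A :=
        cfc_congr (fun x hx => Real.mul_self_sqrt (hspec x hx))
      rw [this, cfc_sub (fun x : ℝ => (1:ℝ)) (fun x : ℝ => x^2) A, cfc_const_one ℝ A,
        cfc_pow_id (R := ℝ) A 2, sq]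
    have hR'nn : (0:H →L[ℂ] H) ≤ cfc f A := cfc_nonneg (fun x _ => Real.sqrt_nonneg _)
    have h1 : CFC.sqrt (1 - A * A) = R := CFC.sqrt_unique hR2 hRnn
    have h2 : CFC.sqrt (1 - A * A) = cfc f A := CFC.sqrt_unique hR'sq hR'nn
    have hRe : R = cfc f A := by rw [← h1, h2]
    have := cfc_commute_cfc (id : ℝ → ℝ) f A
    rw [cfc_id ℝ A] at this
    rw [hRe]; exact this
  -- V commutes with R
  have hVR : V * R = R * V := by
    have hpos : (V * R * V).IsPositive := by
      have := hR.conj_adjoint V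
      rwa [hV.1.adjoint_eq, ← mul_def, ← mul_def, ← mul_assoc] at this
    have hsq : (V * R * V) * (V * R * V) = 1 - A * A := by
      have e : V * R * V * (V * R * V) = V * (R * R) * V := by
        calc V * R * V * (V * R * V) = V * R * (V * V) * R * V := by noncomm_ring
        _ = V * (R * R) * V := by rw [hV.2]; noncomm_ring
      rw [e, hR2]
      have eA : V * (A * A) * V = A * A := by
        calc V * (A * A) * V = (V * A) * (A * V) := by noncomm_ring
        _ = (-(A * V)) * (A * V) := by rw [hVA]
        _ = -(A * (V * A) * V) := by noncomm_ring
        _ = -(A * (-(A * V)) * V) := by rw [hVA]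
        _ = A * A * (V * V) := by noncomm_ring
        _ = A * A := by rw [hV.2, mul_one]
      calc V * (1 - A * A) * V = V * V - V * (A * A) * V := by noncomm_ring
      _ = 1 - A * A := by rw [hV.2, eA]
    have h1 : CFC.sqrt (1 - A * A) = R := CFC.sqrt_unique hR2 hRnn
    have h2 : CFC.sqrt (1 - A * A) = V * R * V :=
      CFC.sqrt_unique hsq ((nonneg_iff_isPositive _).mpr hpos)
    have hVRV : V * R * V = R := by rw [← h2, h1]
    calc V * R = V * R * (V * V) := by rw [hV.2, mul_one]
    _ = (V * R * V) * V := by noncomm_ring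
    _ = R * V := by rw [hVRV]
  -- anticommutation of R*V with A
  have hRVA : R * V * A = -(A * (R * V)) := by
    calc R * V * A = R * (V * A) := by rw [mul_assoc]
    _ = R * (-(A * V)) := by rw [hVA]
    _ = -((R * A) * V) := by noncomm_ring
    _ = -((A * R) * V) := by rw [← hAR]
    _ = -(A * (R * V)) := by rw [mul_assoc]
  have hRVRV : (R * V) * (R * V) = 1 - A * A := by
    calc (R * V) * (R * V) = R * (V * R) * V := by noncomm_ring
    _ = R * (R * V) * V := by rw [hVR]
    _ = (R * R) * (V * V) := by noncomm_ring
    _ = (1 - A * A) * 1 := by rw [hR2, hV.2]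
    _ = 1 - A * A := mul_one _
  -- selfadjointness of R*V
  have hRVsa : IsSelfAdjoint (R * V) := by
    rw [IsSelfAdjoint, star_mul, hRsa.star_eq, hV.1.star_eq, hVR]
  -- idempotency computations
  have hX : (1 + A + R * V) * (1 + A + R * V) = (2:ℂ) • (1 + A + R * V) := by
    have expand : (1 + A + R * V) * (1 + A + R * V) =
        1 + A + R * V + A + A * A + A * (R * V) + R * V + (R * V) * A + (R * V) * (R * V) := by
      noncomm_ring
    rw [expand, hRVA, hRVRV, two_smul]
    abel
  have hY : (1 - A + R * V) * (1 - A + R * V) = (2:ℂ) • (1 - A + R * V) := by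
    have expand : (1 - A + R * V) * (1 - A + R * V) =
        1 - A + R * V - A + A * A - A * (R * V) + R * V - (R * V) * A + (R * V) * (R * V) := by
      noncomm_ring
    rw [expand, hRVA, hRVRV, two_smul]
    abel
  have half : ∀ X : H →L[ℂ] H, X * X = (2:ℂ) • X →
      ((1/2 : ℂ) • X) * ((1/2 : ℂ) • X) = (1/2 : ℂ) • X := by
    intro X hXX
    rw [smul_mul_assoc, mul_smul_comm, hXX, smul_smul, smul_smul]
    norm_num
  refine ⟨⟨?_, half _ hX⟩, ⟨?_, half _ hY⟩, ?_, ?_⟩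
  · rw [IsSelfAdjoint, star_smul, star_add, star_add, star_one, hA.star_eq, hRVsa.star_eq]
    norm_num
  · rw [IsSelfAdjoint, star_smul, star_add, star_sub, star_one, hA.star_eq, hRVsa.star_eq]
    norm_num
  · rw [← smul_sub]
    have : (1 + A + R * V) - (1 - A + R * V) = (2:ℂ) • A := by rw [two_smul]; abel
    rw [this, smul_smul]; norm_num
  · rw [← smul_add]
    have : (1 + A + R * V) + (1 - A + R * V) = (2:ℂ) • 1 + (2:ℂ) • (R * V) := by
      rw [two_smul, two_smul]; abel
    rw [this, smul_add, smul_smul, smul_smul]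
    norm_num
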